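/- arXiv:1707.03494 — 4 statements merged into one kernel-verified Lean document; each statement's English description precedes it below -/
import Mathlib

section
/- Under the bounded-noise model (|ε_v| ≤ M a.s., i.i.d., mean 0, variance σ²), with K₀ a set of k inactive vertices and K any set of k vertices, define ℜ(K) = (b−a)·S₁(K) + ∑_{v∈K active}(A_v − b) where S₁(K) is the number of active vertices in K. If ℜ(K) > 0 then P(S_K < S_{K₀}) ≤ exp( −3·ℜ(K)² / (12σ²|K\K₀| + 4M·ℜ(K)) ). -/
open MeasureTheory ProbabilityTheory Real

lemma exp_le_cubic {x : ℝ} (hx : |x| ≤ 1) :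
    Real.exp x ≤ 1 + x + x ^ 2 / 2 + (2/9) * |x| ^ 3 := by
  have h := Real.exp_bound hx (n := 3) (by norm_num)
  have h2 := (abs_sub_le_iff.1 h).1
  have hs : ∑ m ∈ Finset.range 3, x ^ m / m.factorial = 1 + x + x ^ 2 / 2 := by
    simp [Finset.sum_range_succ, Nat.factorial]
  rw [hs] at h2
  norm_num [Nat.factorial] at h2
  linarith

lemma integrable_of_abs_bound {Ω : Type*} [MeasurableSpace Ω] {μ : Measure Ω}
    [IsFiniteMeasure μ] {f : Ω → ℝ} (hm : AEStronglyMeasurable f μ) {C : ℝ}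
    (h : ∀ᵐ ω ∂μ, |f ω| ≤ C) : Integrable f μ :=
  Integrable.mono' (integrable_const C) hm (h.mono fun ω hω => by rwa [Real.norm_eq_abs])

lemma mgf_bound {Ω : Type*} [MeasurableSpace Ω] {μ : Measure Ω}
    [IsProbabilityMeasure μ] {Y : Ω → ℝ} (hm : Measurable Y) {M σ2 t : ℝ}
    (hM : 0 ≤ M)
    (hb : ∀ᵐ ω ∂μ, |Y ω| ≤ M) (hmean : ∫ ω, Y ω ∂μ = 0)
    (hvar : variance Y μ = σ2) (ht : |t| * M ≤ 1) :
    mgf Y μ t ≤ Real.exp (t ^ 2 * σ2 / 2 * (1 + (4/9) * (|t| * M))) := by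
  have hσ2 : 0 ≤ σ2 := hvar ▸ variance_nonneg Y μ
  have hL2 : MemLp Y 2 μ := MemLp.of_bound hm.aestronglyMeasurable M
    (hb.mono fun ω h => by rwa [Real.norm_eq_abs])
  have hsq : ∫ ω, Y ω ^ 2 ∂μ = σ2 := by
    have := variance_eq_sub hL2
    rw [hvar, hmean] at this
    simp only [Pi.pow_apply] at this
    linarith [this]
  have hYint : Integrable Y μ := hL2.integrable one_le_two
  have hY2int : Integrable (fun ω => Y ω ^ 2) μ := by
    simpa [Pi.pow_apply] using hL2.integrable_sq
  have hexpint : Integrable (fun ω => Real.exp (t * Y ω)) μ := by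
    refine integrable_of_abs_bound ((hm.const_mul t).exp).aestronglyMeasurable
      (C := Real.exp (|t| * M)) (hb.mono fun ω hω => ?_)
    rw [abs_of_pos (Real.exp_pos _), Real.exp_le_exp]
    calc t * Y ω ≤ |t * Y ω| := le_abs_self _
      _ = |t| * |Y ω| := abs_mul _ _
      _ ≤ |t| * M := by gcongr
  set c : ℝ := t ^ 2 / 2 + (2/9) * |t| ^ 3 * M with hc
  have hcnn : 0 ≤ c := by positivity
  have key : mgf Y μ t ≤ 1 + c * σ2 := by
    rw [mgf]
    have hbound : ∀ᵐ ω ∂μ, Real.exp (t * Y ω) ≤ 1 + t * Y ω + c * Y ω ^ 2 := by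
      filter_upwards [hb] with ω hω
      have habs : |t * Y ω| ≤ 1 := by
        rw [abs_mul]
        calc |t| * |Y ω| ≤ |t| * M := by gcongr
          _ ≤ 1 := ht
      have h1 := exp_le_cubic habs
      have h2 : |t * Y ω| ^ 3 ≤ |t| ^ 3 * (M * Y ω ^ 2) := by
        have e1 : |t * Y ω| ^ 3 = |t| ^ 3 * (|Y ω| * Y ω ^ 2) := by
          rw [abs_mul, mul_pow, show |Y ω| ^ 3 = |Y ω| * |Y ω| ^ 2 from by ring, sq_abs]
        rw [e1]
        gcongr
      calc Real.exp (t * Y ω) ≤ 1 + t * Y ω + (t * Y ω) ^ 2 / 2 + (2/9) * |t * Y ω| ^ 3 := h1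
        _ ≤ 1 + t * Y ω + (t * Y ω) ^ 2 / 2 + (2/9) * (|t| ^ 3 * (M * Y ω ^ 2)) := by linarith
        _ = 1 + t * Y ω + c * Y ω ^ 2 := by
            rw [hc, mul_pow]; ring
    have hrhs : Integrable (fun ω => 1 + t * Y ω + c * Y ω ^ 2) μ :=
      ((integrable_const 1).add (hYint.const_mul t)).add (hY2int.const_mul c)
    calc ∫ ω, Real.exp (t * Y ω) ∂μ ≤ ∫ ω, (1 + t * Y ω + c * Y ω ^ 2) ∂μ :=
          integral_mono_ae hexpint hrhs hbound
      _ = 1 + c * σ2 := by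
          have hadd : Integrable (fun ω => 1 + t * Y ω) μ := by
            exact (integrable_const 1).add (hYint.const_mul t)
          have hadd1 : Integrable (fun ω => t * Y ω) μ := hYint.const_mul t
          rw [integral_add hadd (hY2int.const_mul c),
            integral_add (integrable_const 1) hadd1,
            integral_const_mul, integral_const_mul, hmean, hsq]
          simp
  calc mgf Y μ t ≤ 1 + c * σ2 := key
    _ ≤ Real.exp (c * σ2) := by linarith [Real.add_one_le_exp (c * σ2)]
    _ = Real.exp (t ^ 2 * σ2 / 2 * (1 + (4/9) * (|t| * M))) := by
        congr 1
        rw [hc]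
        have : |t| ^ 3 = t ^ 2 * |t| := by
          rw [pow_succ' |t| 2]; rw [sq_abs]; ring
        rw [this]; ring

lemma arith_bound (σ2 n M R t : ℝ) (hσ2 : 0 ≤ σ2) (hn : 0 ≤ n) (hM : 0 < M) (hR : 0 < R)
    (ht : t = R / (2 * n * σ2 + M * R)) :
    -t * R + 2 * n * (t ^ 2 * σ2 / 2 * (1 + (4/9) * (t * M))) ≤
      -(3 * R ^ 2) / (12 * σ2 * n + 4 * M * R) := by
  have hP : 0 ≤ n * σ2 := mul_nonneg hn hσ2
  have hQ : 0 < M * R := mul_pos hM hR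
  have hD : 0 < 2 * n * σ2 + M * R := by nlinarith
  have hDen : 0 < 12 * σ2 * n + 4 * M * R := by nlinarith
  have hA : -t * R + 2 * n * (t ^ 2 * σ2 / 2 * (1 + (4/9) * (t * M))) =
      (-(R^2) * (2 * n * σ2 + M * R)^2 + n * σ2 * R^2 * (2 * n * σ2 + M * R)
        + (4/9) * n * σ2 * M * R^3) / (2 * n * σ2 + M * R)^3 := by
    rw [ht]; field_simp; ring
  rw [hA, div_le_div_iff₀ (by positivity) hDen]
  have key : (-(R^2) * (2 * n * σ2 + M * R)^2 + n * σ2 * R^2 * (2 * n * σ2 + M * R)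
        + (4/9) * n * σ2 * M * R^3) * (12 * σ2 * n + 4 * M * R)
      - (-(3 * R ^ 2) * (2 * n * σ2 + M * R)^3)
      = -(R^2) * ((8/3) * (n*σ2)^2 * (M*R) + (38/9) * (n*σ2) * (M*R)^2 + (M*R)^3) := by
    ring
  nlinarith [mul_nonneg (sq_nonneg R) (by positivity :
    (0:ℝ) ≤ (8/3) * (n*σ2)^2 * (M*R) + (38/9) * (n*σ2) * (M*R)^2 + (M*R)^3)]

/-- Bernstein-type misselection bound for a single candidate set `K`:
`P(S_K < S_{K₀}) ≤ exp(−3ℜ(K)² / (12σ²|K\K₀| + 4Mℜ(K)))` when `ℜ(K) > 0`. -/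
theorem stmt_8
    {Ω V : Type*} [MeasurableSpace Ω] (μ : Measure Ω) [IsProbabilityMeasure μ]
    [Fintype V] [DecidableEq V]
    (Act : Finset V) (a b σ M : ℝ) (hab : a < b)
    (Aval : V → ℝ)
    (hInact : ∀ v ∉ Act, Aval v = a)
    (hAct : ∀ v ∈ Act, b ≤ Aval v)
    (ε : V → Ω → ℝ)
    (hmeas : ∀ v, Measurable (ε v))
    (hindep : iIndepFun ε μ)
    (hident : ∀ v w, IdentDistrib (ε v) (ε w) μ μ)
    (hmean : ∀ v, ∫ ω, ε v ω ∂μ = 0)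
    (hvar : ∀ v, variance (ε v) μ = σ ^ 2)
    (hbd : ∀ v, ∀ᵐ ω ∂μ, |ε v ω| ≤ M)
    (X : V → Ω → ℝ) (hX : ∀ v ω, X v ω = Aval v + ε v ω)
    (K₀ K : Finset V) (k : ℕ)
    (hKcard : K.card = k) (hK₀card : K₀.card = k)
    (hK₀inact : K₀ ∩ Act = ∅)
    (R : ℝ)
    (hR : R = (b - a) * ((K ∩ Act).card : ℝ) + ∑ v ∈ K ∩ Act, (Aval v - b))
    (hRpos : 0 < R) :
    (μ {ω | ∑ v ∈ K, X v ω < ∑ v ∈ K₀, X v ω}).toReal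
      ≤ Real.exp (-(3 * R ^ 2) / (12 * σ ^ 2 * ((K \ K₀).card : ℝ) + 4 * M * R)) := by
  classical
  -- K ∩ Act is nonempty
  have hKAct : (K ∩ Act).Nonempty := by
    rcases (K ∩ Act).eq_empty_or_nonempty with h | h
    · exfalso; rw [h] at hR; simp at hR; linarith
    · exact h
  obtain ⟨v₀, hv₀⟩ := hKAct
  -- M is nonnegative
  have hM0 : 0 ≤ M := by
    obtain ⟨ω, hω⟩ := (hbd v₀).exists
    exact le_trans (abs_nonneg _) hω
  -- each v in K₀ is inactive
  have hK₀A : ∀ v ∈ K₀, Aval v = a := by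
    intro v hv
    refine hInact v fun hvA => ?_
    have : v ∈ K₀ ∩ Act := Finset.mem_inter.2 ⟨hv, hvA⟩
    rw [hK₀inact] at this
    exact absurd this (Finset.notMem_empty v)
  -- deterministic part equals R
  have hRdet : ∑ v ∈ K, Aval v - ∑ v ∈ K₀, Aval v = R := by
    have h1 : ∑ v ∈ K₀, Aval v = (k : ℝ) * a := by
      rw [Finset.sum_congr rfl hK₀A, Finset.sum_const, hK₀card, nsmul_eq_mul]
    have h2 : ∑ v ∈ K, Aval v
        = ∑ v ∈ K ∩ Act, Aval v + ∑ v ∈ K \ Act, Aval v :=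
      (Finset.sum_inter_add_sum_sdiff K Act Aval).symm
    have h3 : ∑ v ∈ K \ Act, Aval v = ((K \ Act).card : ℝ) * a := by
      rw [Finset.sum_congr rfl (fun v hv => hInact v (Finset.mem_sdiff.1 hv).2),
        Finset.sum_const, nsmul_eq_mul]
    have hcards : (K ∩ Act).card + (K \ Act).card = k := by
      rw [Finset.card_inter_add_card_sdiff, hKcard]
    have hsum : ∑ v ∈ K ∩ Act, (Aval v - b)
        = ∑ v ∈ K ∩ Act, Aval v - ((K ∩ Act).card : ℝ) * b := by
      rw [Finset.sum_sub_distrib, Finset.sum_const, nsmul_eq_mul]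
    have hc : ((K ∩ Act).card : ℝ) + ((K \ Act).card : ℝ) = (k : ℝ) := by
      exact_mod_cast hcards
    have hc' : ((K ∩ Act).card : ℝ) * a + ((K \ Act).card : ℝ) * a = (k : ℝ) * a := by
      rw [← add_mul, hc]
    rw [h1, h2, h3, hR, hsum]
    linarith
  -- decomposition of the sums
  have hdecomp : ∀ ω, ∑ v ∈ K, X v ω - ∑ v ∈ K₀, X v ω
      = R + (∑ v ∈ K \ K₀, ε v ω - ∑ v ∈ K₀ \ K, ε v ω) := by
    intro ω
    have e1 : ∑ v ∈ K, X v ω = ∑ v ∈ K, Aval v + ∑ v ∈ K, ε v ω := by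
      rw [← Finset.sum_add_distrib]; exact Finset.sum_congr rfl fun v _ => hX v ω
    have e2 : ∑ v ∈ K₀, X v ω = ∑ v ∈ K₀, Aval v + ∑ v ∈ K₀, ε v ω := by
      rw [← Finset.sum_add_distrib]; exact Finset.sum_congr rfl fun v _ => hX v ω
    have e3 : ∑ v ∈ K, ε v ω = ∑ v ∈ K ∩ K₀, ε v ω + ∑ v ∈ K \ K₀, ε v ω :=
      (Finset.sum_inter_add_sum_sdiff K K₀ _).symm
    have e4 : ∑ v ∈ K₀, ε v ω = ∑ v ∈ K ∩ K₀, ε v ω + ∑ v ∈ K₀ \ K, ε v ω := by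
      rw [Finset.inter_comm]
      exact (Finset.sum_inter_add_sum_sdiff K₀ K _).symm
    rw [e1, e2, e3, e4, ← hRdet]; ring
  rcases eq_or_lt_of_le hM0 with hMeq | hMpos
  · -- M = 0 : all noise vanishes a.s.
    have hae : ∀ᵐ ω ∂μ, ∀ v, ε v ω = 0 := by
      rw [ae_all_iff]
      intro v
      filter_upwards [hbd v] with ω h
      have : |ε v ω| ≤ 0 := hMeq ▸ h
      exact abs_nonpos_iff.1 this
    have hnull : μ {ω | ∑ v ∈ K, X v ω < ∑ v ∈ K₀, X v ω} = 0 := by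
      rw [measure_eq_zero_iff_ae_notMem]
      filter_upwards [hae] with ω hω
      simp only [Set.mem_setOf_eq, not_lt]
      have h1 : ∑ v ∈ K \ K₀, ε v ω = 0 := Finset.sum_eq_zero fun v _ => hω v
      have h2 : ∑ v ∈ K₀ \ K, ε v ω = 0 := Finset.sum_eq_zero fun v _ => hω v
      have h3 := hdecomp ω
      rw [h1, h2] at h3
      linarith
    rw [hnull]
    simp only [ENNReal.toReal_zero]
    exact (Real.exp_pos _).le
  · -- main case : M > 0
    set n : ℕ := (K \ K₀).card with hn
    set t : ℝ := R / (2 * (n : ℝ) * σ ^ 2 + M * R) with htdef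
    have hDpos : 0 < 2 * (n : ℝ) * σ ^ 2 + M * R := by positivity
    have ht0 : 0 < t := div_pos hRpos hDpos
    have htM : t * M ≤ 1 := by
      rw [htdef, div_mul_eq_mul_div, div_le_one hDpos]
      nlinarith [sq_nonneg σ, Nat.cast_nonneg (α := ℝ) n]
    -- the signed noise variables
    set c : V → ℝ := fun v => if v ∈ K \ K₀ then 1 else -1 with hcdef
    have hcabs : ∀ v, |c v| = 1 := by
      intro v; rw [hcdef]; dsimp only; split <;> norm_num
    have hcsq : ∀ v, (c v) ^ 2 = 1 := by
      intro v; rw [hcdef]; dsimp only; split <;> norm_num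
    set W : V → Ω → ℝ := fun v => (fun x => c v * x) ∘ ε v with hWdef
    have hW_meas : ∀ v, Measurable (W v) := fun v => (hmeas v).const_mul (c v)
    have hW_indep : iIndepFun W μ :=
      hindep.comp (fun v => fun x => c v * x) (fun v => measurable_id.const_mul (c v))
    set S : Finset V := (K \ K₀) ∪ (K₀ \ K) with hSdef
    have hdisj : Disjoint (K \ K₀) (K₀ \ K) := disjoint_sdiff_sdiff
    have hWsum : ∀ ω, ∑ v ∈ S, W v ω
        = ∑ v ∈ K \ K₀, ε v ω - ∑ v ∈ K₀ \ K, ε v ω := by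
      intro ω
      rw [hSdef, Finset.sum_union hdisj]
      have e1 : ∑ v ∈ K \ K₀, W v ω = ∑ v ∈ K \ K₀, ε v ω := by
        refine Finset.sum_congr rfl fun v hv => ?_
        simp only [hWdef, Function.comp_apply, hcdef, if_pos hv, one_mul]
      have e2 : ∑ v ∈ K₀ \ K, W v ω = -∑ v ∈ K₀ \ K, ε v ω := by
        rw [← Finset.sum_neg_distrib]
        refine Finset.sum_congr rfl fun v hv => ?_
        have hv' : v ∉ K \ K₀ := fun h =>
          (Finset.mem_sdiff.1 hv).2 (Finset.mem_sdiff.1 h).1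
        simp only [hWdef, Function.comp_apply, hcdef, if_neg hv', neg_mul, one_mul]
      rw [e1, e2]; ring
    -- per-variable properties
    have hWbd : ∀ v, ∀ᵐ ω ∂μ, |W v ω| ≤ M := by
      intro v
      filter_upwards [hbd v] with ω hω
      have : |W v ω| = |ε v ω| := by
        simp only [hWdef, Function.comp_apply, abs_mul, hcabs v, one_mul]
      rw [this]; exact hω
    have hWmean : ∀ v, ∫ ω, W v ω ∂μ = 0 := by
      intro v
      have : ∫ ω, W v ω ∂μ = c v * ∫ ω, ε v ω ∂μ := by
        simp only [hWdef, Function.comp_apply]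
        exact integral_const_mul (c v) _
      rw [this, hmean, mul_zero]
    have hWvar : ∀ v, variance (W v) μ = σ ^ 2 := by
      intro v
      have hWe : W v = c v • ε v := by
        funext ω; simp [hWdef, Pi.smul_apply, smul_eq_mul]
      rw [hWe, variance_smul, hcsq, hvar, one_mul]
    -- per-variable mgf bound
    have habsneg : |(-t)| = t := by rw [abs_neg, abs_of_pos ht0]
    set B : ℝ := t ^ 2 * σ ^ 2 / 2 * (1 + (4/9) * (t * M)) with hB
    have hWv : ∀ v, mgf (W v) μ (-t) ≤ Real.exp B := by
      intro v
      have := mgf_bound (μ := μ) (hW_meas v) hM0 (hWbd v) (hWmean v) (hWvar v)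
        (t := -t) (by rw [habsneg]; exact htM)
      rw [neg_pow, habsneg] at this
      simpa [hB] using this
    -- integrability for Chernoff
    have hint : ∀ v ∈ S, Integrable (fun ω => Real.exp (-t * W v ω)) μ := by
      intro v _
      refine integrable_of_abs_bound (((hW_meas v).const_mul (-t)).exp).aestronglyMeasurable
        (C := Real.exp (t * M)) ((hWbd v).mono fun ω hω => ?_)
      rw [abs_of_pos (Real.exp_pos _), Real.exp_le_exp]
      calc -t * W v ω ≤ |(-t) * W v ω| := le_abs_self _
        _ = t * |W v ω| := by rw [abs_mul, habsneg]
        _ ≤ t * M := by gcongr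
    have hZint : Integrable (fun ω => Real.exp (-t * (∑ v ∈ S, W v) ω)) μ :=
      hW_indep.integrable_exp_mul_sum hW_meas hint
    have hcher := measure_le_le_exp_mul_mgf (μ := μ) (X := ∑ v ∈ S, W v) (-R)
      (neg_nonpos.2 ht0.le) hZint
    have hmgf : mgf (∑ v ∈ S, W v) μ (-t) = ∏ v ∈ S, mgf (W v) μ (-t) :=
      hW_indep.mgf_sum hW_meas S
    have hScard : S.card = 2 * n := by
      have hcomm : (K₀ \ K).card = n :=
        (Finset.card_sdiff_comm (hKcard.trans hK₀card.symm)).symm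
      rw [hSdef, Finset.card_union_of_disjoint hdisj, hcomm]
      omega
    have hprod : ∏ v ∈ S, mgf (W v) μ (-t) ≤ Real.exp ((2 * (n:ℝ)) * B) := by
      calc ∏ v ∈ S, mgf (W v) μ (-t) ≤ ∏ _v ∈ S, Real.exp B :=
            Finset.prod_le_prod (fun v _ => mgf_nonneg) (fun v _ => hWv v)
        _ = Real.exp B ^ S.card := Finset.prod_const _
        _ = Real.exp ((S.card : ℝ) * B) := by rw [← Real.exp_nat_mul]
        _ = Real.exp ((2 * (n:ℝ)) * B) := by rw [hScard]; push_cast; ring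
    -- event inclusion
    have hsub : {ω | ∑ v ∈ K, X v ω < ∑ v ∈ K₀, X v ω}
        ⊆ {ω | (∑ v ∈ S, W v) ω ≤ -R} := by
      intro ω hω
      simp only [Set.mem_setOf_eq] at hω ⊢
      rw [Finset.sum_apply, hWsum ω]
      have := hdecomp ω
      linarith
    -- final chain
    have harith := arith_bound (σ ^ 2) ((n : ℝ)) M R t (sq_nonneg σ)
      (Nat.cast_nonneg n) hMpos hRpos htdef
    calc (μ {ω | ∑ v ∈ K, X v ω < ∑ v ∈ K₀, X v ω}).toReal
        ≤ (μ {ω | (∑ v ∈ S, W v) ω ≤ -R}).toReal :=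
          ENNReal.toReal_mono (measure_ne_top μ _) (measure_mono hsub)
      _ ≤ Real.exp (-(-t) * (-R)) * mgf (∑ v ∈ S, W v) μ (-t) := hcher
      _ ≤ Real.exp (-(t * R)) * Real.exp ((2 * (n:ℝ)) * B) := by
          rw [show -(-t) * (-R) = -(t * R) from by ring]
          exact mul_le_mul_of_nonneg_left (hmgf ▸ hprod) (Real.exp_pos _).le
      _ = Real.exp (-(t * R) + (2 * (n:ℝ)) * B) := (Real.exp_add _ _).symm
      _ ≤ Real.exp (-(3 * R ^ 2) / (12 * σ ^ 2 * ((K \ K₀).card : ℝ) + 4 * M * R)) := by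
          rw [Real.exp_le_exp]
          rw [hB] at *
          have : -(t * R) + (2 * (n:ℝ)) * (t ^ 2 * σ ^ 2 / 2 * (1 + (4/9) * (t * M)))
              = -t * R + 2 * (n:ℝ) * (t ^ 2 * σ ^ 2 / 2 * (1 + (4/9) * (t * M))) := by ring
          rw [this, ← hn]
          exact harith
end

section
/- Under the bounded-noise model, let 𝒦 be any finite collection of k-element vertex subsets and K₀ a k-element set of inactive vertices. Define ℜ(K) as above and assume ℜ(K) > 0 for all K ∈ 𝒦 containing at least one active vertex. Then P(∃ K ∈ 𝒦 with K ∩ A ≠ ∅ and S_K < S_{K₀}) ≤ ∑_{K∈𝒦, K∩A≠∅} exp(−3ℜ(K)²/(12σ²|K\K₀| + 4M·ℜ(K))). -/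
open MeasureTheory ProbabilityTheory

private lemma aux_fact (n : ℕ) : 2 * 3 ^ n ≤ (Nat.factorial (n+2)) := by
  induction n with
  | zero => simp [Nat.factorial]
  | succ n ih =>
    have : (Nat.factorial (n+3)) = (n + 3) * (Nat.factorial (n+2)) := rfl
    calc 2 * 3 ^ (n + 1) = 3 * (2 * 3 ^ n) := by ring
    _ ≤ 3 * (Nat.factorial (n+2)) := by omega
    _ ≤ (n + 3) * (Nat.factorial (n+2)) := by
        exact Nat.mul_le_mul_right _ (by omega)
    _ = (Nat.factorial (n+3)) := this.symm

set_option maxHeartbeats 1000000 in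
private lemma exp_le_quad {x u : ℝ} (hu0 : 0 ≤ u) (hu3 : u < 3) (hxu : x ≤ u) :
    Real.exp x ≤ 1 + x + x ^ 2 / (2 * (1 - u / 3)) := by
  have hden : 0 < 2 * (1 - u / 3) := by nlinarith
  rcases le_or_gt x 0 with hx | hx
  · -- exp x ≤ 1 + x + x^2/2 for x ≤ 0
    have h1 : ∑ i ∈ Finset.range 3, (-x) ^ i / (Nat.factorial i) ≤ Real.exp (-x) :=
      Real.sum_le_exp_of_nonneg (by linarith) 3
    have hsum : ∑ i ∈ Finset.range 3, (-x) ^ i / ((Nat.factorial i) : ℝ) = 1 - x + x ^ 2 / 2 := by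
      simp [Finset.sum_range_succ, Nat.factorial]
      ring
    have h2 : 1 - x + x ^ 2 / 2 ≤ Real.exp (-x) := by rw [← hsum]; exact h1
    have hEpos := Real.exp_pos x
    have h3 : 1 - x + x ^ 2 / 2 ≤ (Real.exp x)⁻¹ := by rw [← Real.exp_neg]; exact h2
    have h4 : Real.exp x * (1 - x + x ^ 2 / 2) ≤ 1 := by
      have := mul_le_mul_of_nonneg_left h3 hEpos.le
      rwa [mul_inv_cancel₀ hEpos.ne'] at this
    have h5 : (0:ℝ) < 1 - x + x ^ 2 / 2 := by nlinarith
    have hbase : Real.exp x ≤ 1 + x + x ^ 2 / 2 := by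
      nlinarith [sq_nonneg (x ^ 2)]
    have : x ^ 2 / 2 ≤ x ^ 2 / (2 * (1 - u / 3)) := by
      apply div_le_div_of_nonneg_left (sq_nonneg x) hden
      nlinarith
    linarith
  · -- series argument for 0 < x ≤ u
    have hxpos : 0 ≤ x := hx.le
    have hexp : Real.exp x = ∑' n : ℕ, x ^ n / (Nat.factorial n) := by
      rw [Real.exp_eq_exp_ℝ, NormedSpace.exp_eq_tsum_div]
    have hf : Summable (fun n : ℕ => x ^ n / (Nat.factorial n)) := Real.summable_pow_div_factorial x
    have hq : (0:ℝ) ≤ u / 3 := by linarith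
    have hq1 : u / 3 < 1 := by linarith
    have hg : Summable (fun n : ℕ => x ^ 2 / 2 * (u / 3) ^ n) :=
      (summable_geometric_of_lt_one hq hq1).mul_left _
    have htail : Summable (fun n : ℕ => x ^ (n + 2) / (Nat.factorial (n+2))) :=
      (summable_nat_add_iff 2).2 hf
    have hsplit : (∑' n : ℕ, x ^ n / (Nat.factorial n))
        = 1 + x + ∑' n : ℕ, x ^ (n + 2) / (Nat.factorial (n+2)) := by
      rw [Summable.tsum_eq_zero_add hf, Summable.tsum_eq_zero_add ((summable_nat_add_iff 1).2 hf)]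
      simp [Nat.factorial]
      ring
    have hterm : ∀ n : ℕ, x ^ (n + 2) / (Nat.factorial (n+2)) ≤ x ^ 2 / 2 * (u / 3) ^ n := by
      intro n
      have hfact : (2 * 3 ^ n : ℝ) ≤ (Nat.factorial (n+2)) := by exact_mod_cast aux_fact n
      have hnum : x ^ (n + 2) ≤ x ^ 2 * u ^ n := by
        have hxn : x ^ n ≤ u ^ n := pow_le_pow_left₀ hxpos hxu n
        calc x ^ (n + 2) = x ^ 2 * x ^ n := by ring
        _ ≤ x ^ 2 * u ^ n := mul_le_mul_of_nonneg_left hxn (sq_nonneg x)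
      have h2 : (0:ℝ) < 2 * 3 ^ n := by positivity
      calc x ^ (n + 2) / (Nat.factorial (n+2)) ≤ (x ^ 2 * u ^ n) / (2 * 3 ^ n) := by
            apply div_le_div₀ (by positivity) hnum h2 hfact
      _ = x ^ 2 / 2 * (u / 3) ^ n := by
            rw [div_pow]; ring
    have hle : (∑' n : ℕ, x ^ (n + 2) / (Nat.factorial (n+2)))
        ≤ ∑' n : ℕ, x ^ 2 / 2 * (u / 3) ^ n := Summable.tsum_le_tsum hterm htail hg
    have hgeo : (∑' n : ℕ, x ^ 2 / 2 * (u / 3) ^ n) = x ^ 2 / 2 * (1 - u / 3)⁻¹ := by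
      rw [tsum_mul_left, tsum_geometric_of_lt_one hq hq1]
    have heq : x ^ 2 / 2 * (1 - u / 3)⁻¹ = x ^ 2 / (2 * (1 - u / 3)) := by
      rw [← div_eq_mul_inv, div_div]
    rw [hexp, hsplit]
    linarith [hle, hgeo, heq]

private lemma aux_mgf {Ω : Type*} [MeasurableSpace Ω] (μ : Measure Ω) [IsProbabilityMeasure μ]
    (W : Ω → ℝ) (hW : Measurable W) (M s2 t : ℝ) (hM : 0 ≤ M)
    (hbd : ∀ᵐ ω ∂μ, |W ω| ≤ M) (hmean : ∫ ω, W ω ∂μ = 0)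
    (hvar : ∫ ω, (W ω) ^ 2 ∂μ = s2) (ht : 0 ≤ t) (htM : t * M < 3) :
    mgf W μ t ≤ Real.exp (s2 * (t ^ 2 / (2 * (1 - t * M / 3)))) := by
  have hu0 : 0 ≤ t * M := mul_nonneg ht hM
  set c : ℝ := t ^ 2 / (2 * (1 - t * M / 3)) with hc
  have hcpos : 0 ≤ c := by
    apply div_nonneg (sq_nonneg t)
    nlinarith
  have intW : Integrable W μ :=
    (integrable_const M).mono' hW.aestronglyMeasurable
      (by filter_upwards [hbd] with ω h using by simpa using h)
  have intW2 : Integrable (fun ω => (W ω) ^ 2) μ := by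
    refine (integrable_const (M ^ 2)).mono' (hW.pow_const 2).aestronglyMeasurable ?_
    filter_upwards [hbd] with ω h
    have : |W ω| ^ 2 ≤ M ^ 2 := by
      apply pow_le_pow_left₀ (abs_nonneg _) h
    simpa [abs_pow, sq_abs] using this
  have intExp : Integrable (fun ω => Real.exp (t * W ω)) μ := by
    refine (integrable_const (Real.exp (t * M))).mono'
      ((hW.const_mul t).exp).aestronglyMeasurable ?_
    filter_upwards [hbd] with ω h
    have h1 : t * W ω ≤ t * M :=
      mul_le_mul_of_nonneg_left ((le_abs_self _).trans h) ht
    simpa [abs_of_pos (Real.exp_pos _)] using Real.exp_le_exp.2 h1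
  have intRHS : Integrable (fun ω => 1 + t * W ω + c * (W ω) ^ 2) μ :=
    ((integrable_const 1).add (intW.const_mul t)).add (intW2.const_mul c)
  have hptwise : ∀ᵐ ω ∂μ, Real.exp (t * W ω) ≤ 1 + t * W ω + c * (W ω) ^ 2 := by
    filter_upwards [hbd] with ω h
    have hx : t * W ω ≤ t * M :=
      mul_le_mul_of_nonneg_left ((le_abs_self _).trans h) ht
    have := exp_le_quad hu0 htM hx
    have heq : (t * W ω) ^ 2 / (2 * (1 - t * M / 3)) = c * (W ω) ^ 2 := by
      rw [hc]; ring
    linarith [heq ▸ this]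
  have hint : ∫ ω, Real.exp (t * W ω) ∂μ ≤ ∫ ω, (1 + t * W ω + c * (W ω) ^ 2) ∂μ :=
    integral_mono_ae intExp intRHS hptwise
  have hval : ∫ ω, (1 + t * W ω + c * (W ω) ^ 2) ∂μ = 1 + c * s2 := by
    have h1 : ∫ ω, ((1 + t * W ω) + c * (W ω) ^ 2) ∂μ
        = (∫ ω, (1 + t * W ω) ∂μ) + ∫ ω, c * (W ω) ^ 2 ∂μ :=
      integral_add ((integrable_const 1).add (intW.const_mul t)) (intW2.const_mul c)
    have h2 : ∫ ω, (1 + t * W ω) ∂μ = (∫ _ω, (1:ℝ) ∂μ) + ∫ ω, t * W ω ∂μ :=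
      integral_add (integrable_const 1) (intW.const_mul t)
    rw [h1, h2, MeasureTheory.integral_const_mul, MeasureTheory.integral_const_mul, hmean, hvar]
    simp
  have hfinal : (1 : ℝ) + c * s2 ≤ Real.exp (s2 * c) := by
    have := Real.add_one_le_exp (s2 * c)
    linarith [this]
  calc mgf W μ t = ∫ ω, Real.exp (t * W ω) ∂μ := rfl
  _ ≤ 1 + c * s2 := by rw [← hval]; exact hint
  _ ≤ Real.exp (s2 * c) := hfinal

private lemma aux_arith (s p M r D t : ℝ) (hs : 0 ≤ s) (hp : 0 ≤ p) (hM : 0 ≤ M)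
    (hr : 0 < r) (hDdef : D = 12 * s * p + 4 * M * r) (hD : 0 < D)
    (htdef : t = 6 * r / D) :
    -t * r + 2 * p * (s * (t ^ 2 / (2 * (1 - t * M / 3)))) ≤ -(3 * r ^ 2) / D := by
  have ht0 : 0 ≤ t := by rw [htdef]; exact div_nonneg (by linarith) hD.le
  have htM3 : t * M < 3 := by
    rw [htdef, div_mul_eq_mul_div, div_lt_iff₀ hD, hDdef]
    nlinarith [mul_nonneg hs hp, mul_nonneg hM hr.le]
  have he : (0:ℝ) < 2 * (1 - t * M / 3) := by nlinarith
  set e : ℝ := 2 * (1 - t * M / 3) with hedef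
  have h6 : t * D = 6 * r := by rw [htdef]; exact div_mul_cancel₀ _ hD.ne'
  have hE : e * D = 24 * s * p + 4 * M * r := by
    have h1 : e * D = 2 * D - 2 * M / 3 * (t * D) := by rw [hedef]; ring
    rw [h1, h6, hDdef]; ring
  have he2 : e ≤ 2 := by
    rw [hedef]; nlinarith [mul_nonneg ht0 hM]
  rw [le_div_iff₀ hD]
  have hce : t ^ 2 / e * e = t ^ 2 := div_mul_cancel₀ _ he.ne'
  have hkey : (-t * r + 2 * p * (s * (t ^ 2 / e))) * D * e = -(6 * r ^ 2) := by
    linear_combination (2 * p * s * t - r) * h6 + (-(t * r)) * hE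
      + (2 * p * s * D) * hce + (r * t) * hDdef
  nlinarith [hkey, he, he2, sq_nonneg r]

set_option maxHeartbeats 1000000 in
private lemma aux_bern {Ω V : Type*} [MeasurableSpace Ω] (μ : Measure Ω) [IsProbabilityMeasure μ]
    [Fintype V] [DecidableEq V]
    (ε : V → Ω → ℝ) (hmeas : ∀ v, Measurable (ε v))
    (hindep : iIndepFun ε μ)
    (σ M : ℝ) (hM : 0 ≤ M)
    (hmean : ∀ v, ∫ ω, ε v ω ∂μ = 0)
    (hvar : ∀ v, variance (ε v) μ = σ ^ 2)
    (hbd : ∀ v, ∀ᵐ ω ∂μ, |ε v ω| ≤ M)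
    (P Q : Finset V) (hPQ : Disjoint P Q) (hcard : Q.card = P.card)
    (r : ℝ) (hr : 0 < r) :
    (μ {ω | r ≤ ∑ v ∈ Q, ε v ω - ∑ v ∈ P, ε v ω}).toReal
      ≤ Real.exp (-(3 * r ^ 2) / (12 * σ ^ 2 * (P.card : ℝ) + 4 * M * r)) := by
  have hs2 : (0:ℝ) ≤ σ ^ 2 := sq_nonneg σ
  have hp : (0:ℝ) ≤ (P.card : ℝ) := Nat.cast_nonneg _
  have hMr : (0:ℝ) ≤ M * r := mul_nonneg hM hr.le
  have hDnn : (0:ℝ) ≤ 12 * σ ^ 2 * (P.card : ℝ) + 4 * M * r := by nlinarith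
  rcases eq_or_lt_of_le hDnn with hD0 | hDpos
  · rw [← hD0, div_zero, Real.exp_zero]
    exact le_trans (ENNReal.toReal_mono ENNReal.one_ne_top prob_le_one) (by simp)
  set p : ℝ := (P.card : ℝ) with hpdef
  set D : ℝ := 12 * σ ^ 2 * p + 4 * M * r with hDdef
  set W : V → Ω → ℝ := fun v => if v ∈ P then (fun ω => -ε v ω) else ε v with hWdef
  have hWmeas : ∀ v, Measurable (W v) := by
    intro v
    by_cases h : v ∈ P <;> simp only [hWdef, if_pos, if_neg, h, ite_true, ite_false]
    · exact (hmeas v).neg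
    · exact hmeas v
  have hWindep : iIndepFun W μ := by
    have hcomp := hindep.comp (mγ := fun _ => inferInstance) (fun v => if v ∈ P then (fun x : ℝ => -x) else id)
      (fun v => by by_cases h : v ∈ P <;> simp [h, measurable_neg, measurable_id])
    have : (fun v => (if v ∈ P then (fun x : ℝ => -x) else id) ∘ ε v) = W := by
      funext v ω
      by_cases h : v ∈ P <;> simp [hWdef, h]
    rwa [this] at hcomp
  have hWbd : ∀ v, ∀ᵐ ω ∂μ, |W v ω| ≤ M := by
    intro v
    filter_upwards [hbd v] with ω h
    by_cases hv : v ∈ P <;> simp only [hWdef, hv, ite_true, ite_false, abs_neg] <;> exact h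
  have hWmean : ∀ v, ∫ ω, W v ω ∂μ = 0 := by
    intro v
    by_cases hv : v ∈ P
    · simp only [hWdef, hv, ite_true]
      rw [integral_neg, hmean v, neg_zero]
    · simp only [hWdef, hv, ite_false]
      exact hmean v
  have hWsq : ∀ v, ∫ ω, (W v ω) ^ 2 ∂μ = σ ^ 2 := by
    intro v
    have hmem : MemLp (ε v) 2 μ :=
      MemLp.of_bound (hmeas v).aestronglyMeasurable M
        (by filter_upwards [hbd v] with ω h using by simpa using h)
    have hv2 : ∫ ω, (ε v ω) ^ 2 ∂μ = σ ^ 2 := by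
      have hvd := variance_eq_sub hmem
      rw [hvar v] at hvd
      have hsq : (μ[(ε v) ^ 2] : ℝ) = ∫ ω, (ε v ω) ^ 2 ∂μ := by
        congr 1
      have hmn : (μ[ε v] : ℝ) = 0 := hmean v
      rw [hsq, hmn] at hvd
      linarith [hvd]
    by_cases hv : v ∈ P <;> simp only [hWdef, hv, ite_true, ite_false]
    · simpa [neg_pow] using hv2
    · exact hv2
  set n : ℕ := (P ∪ Q).card with hn
  have hn2 : (n : ℝ) = 2 * p := by
    rw [hn, Finset.card_union_of_disjoint hPQ, hcard, hpdef]
    push_cast; ring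
  set t : ℝ := 6 * r / D with htdef
  have ht : 0 ≤ t := div_nonneg (by linarith) hDpos.le
  have htM : t * M < 3 := by
    rw [htdef, div_mul_eq_mul_div, div_lt_iff₀ hDpos]
    nlinarith [mul_nonneg hs2 hp]
  have he : (0:ℝ) < 1 - t * M / 3 := by linarith [mul_nonneg ht hM]
  have hsum_meas : Measurable (fun ω => ∑ v ∈ P ∪ Q, W v ω) :=
    Finset.measurable_sum _ (fun v _ => hWmeas v)
  have hintexp : Integrable (fun ω => Real.exp (t * ∑ v ∈ P ∪ Q, W v ω)) μ := by
    refine (integrable_const (Real.exp (t * ((n : ℝ) * M)))).mono'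
      ((hsum_meas.const_mul t).exp).aestronglyMeasurable ?_
    have hball : ∀ᵐ ω ∂μ, ∀ v, |ε v ω| ≤ M := ae_all_iff.2 hbd
    filter_upwards [hball] with ω h
    have habs : |∑ v ∈ P ∪ Q, W v ω| ≤ (n : ℝ) * M := by
      calc |∑ v ∈ P ∪ Q, W v ω| ≤ ∑ v ∈ P ∪ Q, |W v ω| :=
            Finset.abs_sum_le_sum_abs _ _
      _ ≤ ∑ _v ∈ P ∪ Q, M := by
            refine Finset.sum_le_sum (fun v _ => ?_)
            by_cases hv : v ∈ P <;>
              simp only [hWdef, hv, ite_true, ite_false, abs_neg] <;> exact h v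
      _ = (n : ℝ) * M := by rw [Finset.sum_const, hn, nsmul_eq_mul]
    have hle : t * ∑ v ∈ P ∪ Q, W v ω ≤ t * ((n : ℝ) * M) :=
      mul_le_mul_of_nonneg_left ((le_abs_self _).trans habs) ht
    simpa [abs_of_pos (Real.exp_pos _)] using Real.exp_le_exp.2 hle
  have hcher := measure_ge_le_exp_mul_mgf (μ := μ)
    (X := fun ω => ∑ v ∈ P ∪ Q, W v ω) (t := t) r ht hintexp
  have hXeq : (∑ v ∈ P ∪ Q, W v) = (fun ω => ∑ v ∈ P ∪ Q, W v ω) := by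
    funext ω; simp [Finset.sum_apply]
  have hmgf : mgf (fun ω => ∑ v ∈ P ∪ Q, W v ω) μ t = ∏ v ∈ P ∪ Q, mgf (W v) μ t := by
    rw [← hXeq]; exact hWindep.mgf_sum hWmeas _
  set c : ℝ := σ ^ 2 * (t ^ 2 / (2 * (1 - t * M / 3))) with hcdef
  have hprod : ∏ v ∈ P ∪ Q, mgf (W v) μ t ≤ Real.exp c ^ n := by
    have h1 : ∏ v ∈ P ∪ Q, mgf (W v) μ t ≤ ∏ _v ∈ P ∪ Q, Real.exp c :=
      Finset.prod_le_prod (fun v _ => mgf_nonneg)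
        (fun v _ => aux_mgf μ (W v) (hWmeas v) M (σ ^ 2) t hM (hWbd v) (hWmean v)
          (hWsq v) ht htM)
    simpa [Finset.prod_const, hn] using h1
  have hsetEq : {ω | r ≤ ∑ v ∈ Q, ε v ω - ∑ v ∈ P, ε v ω}
      = {ω | r ≤ ∑ v ∈ P ∪ Q, W v ω} := by
    ext ω
    have : ∑ v ∈ P ∪ Q, W v ω = ∑ v ∈ Q, ε v ω - ∑ v ∈ P, ε v ω := by
      rw [Finset.sum_union hPQ]
      have h1 : ∑ v ∈ P, W v ω = -∑ v ∈ P, ε v ω := by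
        rw [← Finset.sum_neg_distrib]
        exact Finset.sum_congr rfl (fun v hv => by simp [hWdef, hv])
      have h2 : ∑ v ∈ Q, W v ω = ∑ v ∈ Q, ε v ω := by
        refine Finset.sum_congr rfl (fun v hv => ?_)
        have : v ∉ P := Finset.disjoint_right.1 hPQ hv
        simp [hWdef, this]
      rw [h1, h2]; ring
    simp [this]
  have harith : -t * r + (n : ℝ) * c ≤ -(3 * r ^ 2) / D := by
    rw [hn2, hcdef]
    exact aux_arith (σ ^ 2) p M r D t hs2 hp hM hr hDdef hDpos htdef
  calc (μ {ω | r ≤ ∑ v ∈ Q, ε v ω - ∑ v ∈ P, ε v ω}).toReal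
      = (μ {ω | r ≤ ∑ v ∈ P ∪ Q, W v ω}).toReal := by rw [hsetEq]
  _ ≤ Real.exp (-t * r) * mgf (fun ω => ∑ v ∈ P ∪ Q, W v ω) μ t := hcher
  _ ≤ Real.exp (-t * r) * Real.exp ((n : ℝ) * c) := by
      have := hprod.trans_eq (Real.exp_nat_mul c n).symm
      have hbound : mgf (fun ω => ∑ v ∈ P ∪ Q, W v ω) μ t ≤ Real.exp ((n:ℝ) * c) := by
        rw [hmgf]
        exact hprod.trans (le_of_eq (Real.exp_nat_mul c n).symm)
      exact mul_le_mul_of_nonneg_left hbound (Real.exp_pos _).le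
  _ = Real.exp (-t * r + (n : ℝ) * c) := (Real.exp_add _ _).symm
  _ ≤ Real.exp (-(3 * r ^ 2) / D) := Real.exp_le_exp.2 harith


set_option maxHeartbeats 1000000 in
/-- Union bound over a family `𝒦` of candidate `k`-sets: the probability that some
active-containing `K ∈ 𝒦` beats the inactive set `K₀` is at most the sum of the
individual Bernstein bounds. -/
theorem stmt_9
    {Ω V : Type*} [MeasurableSpace Ω] (μ : Measure Ω) [IsProbabilityMeasure μ]
    [Fintype V] [DecidableEq V]
    (Act : Finset V) (a b σ M : ℝ) (hab : a < b)
    (Aval : V → ℝ)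
    (hInact : ∀ v ∉ Act, Aval v = a)
    (hAct : ∀ v ∈ Act, b ≤ Aval v)
    (ε : V → Ω → ℝ)
    (hmeas : ∀ v, Measurable (ε v))
    (hindep : iIndepFun ε μ)
    (hident : ∀ v w, IdentDistrib (ε v) (ε w) μ μ)
    (hmean : ∀ v, ∫ ω, ε v ω ∂μ = 0)
    (hvar : ∀ v, variance (ε v) μ = σ ^ 2)
    (hbd : ∀ v, ∀ᵐ ω ∂μ, |ε v ω| ≤ M)
    (X : V → Ω → ℝ) (hX : ∀ v ω, X v ω = Aval v + ε v ω)
    (k : ℕ)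
    (𝒦 : Finset (Finset V)) (h𝒦card : ∀ K ∈ 𝒦, K.card = k)
    (K₀ : Finset V) (hK₀card : K₀.card = k) (hK₀inact : K₀ ∩ Act = ∅)
    (R : Finset V → ℝ)
    (hR : ∀ K, R K = (b - a) * ((K ∩ Act).card : ℝ) + ∑ v ∈ K ∩ Act, (Aval v - b))
    (hRpos : ∀ K ∈ 𝒦, (K ∩ Act).Nonempty → 0 < R K) :
    (μ {ω | ∃ K ∈ 𝒦, (K ∩ Act).Nonempty ∧ ∑ v ∈ K, X v ω < ∑ v ∈ K₀, X v ω}).toReal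
      ≤ ∑ K ∈ 𝒦.filter (fun K => (K ∩ Act).Nonempty),
          Real.exp (-(3 * (R K) ^ 2) /
            (12 * σ ^ 2 * ((K \ K₀).card : ℝ) + 4 * M * R K)) := by
  classical
  set F := 𝒦.filter (fun K => (K ∩ Act).Nonempty) with hF
  have key : ∀ K ∈ F, (μ {ω | ∑ v ∈ K, X v ω < ∑ v ∈ K₀, X v ω}).toReal
      ≤ Real.exp (-(3 * (R K) ^ 2) /
          (12 * σ ^ 2 * ((K \ K₀).card : ℝ) + 4 * M * R K)) := by
    intro K hKF
    rw [hF, Finset.mem_filter] at hKF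
    obtain ⟨hK𝒦, hKne⟩ := hKF
    have hRK : 0 < R K := hRpos K hK𝒦 hKne
    have hMnn : 0 ≤ M := by
      obtain ⟨v₀, _⟩ := hKne
      have hnb : (MeasureTheory.ae μ).NeBot := ae_neBot.2 (IsProbabilityMeasure.ne_zero μ)
      obtain ⟨ω, hω⟩ := (hbd v₀).exists
      exact (abs_nonneg _).trans hω
    set P : Finset V := K \ K₀ with hP
    set Q : Finset V := K₀ \ K with hQ
    have hPQ : Disjoint P Q :=
      Finset.disjoint_left.2 fun x hx hx' =>
        (Finset.mem_sdiff.1 hx).2 (Finset.mem_sdiff.1 hx').1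
    have hcards : Q.card = P.card :=
      Finset.card_sdiff_comm (hK₀card.trans (h𝒦card K hK𝒦).symm)
    have hsub : {ω | ∑ v ∈ K, X v ω < ∑ v ∈ K₀, X v ω}
        ⊆ {ω | R K ≤ ∑ v ∈ Q, ε v ω - ∑ v ∈ P, ε v ω} := by
      intro ω hω
      simp only [Set.mem_setOf_eq] at hω ⊢
      have hXs : ∀ S : Finset V, ∑ v ∈ S, X v ω = ∑ v ∈ S, Aval v + ∑ v ∈ S, ε v ω := by
        intro S
        rw [← Finset.sum_add_distrib]
        exact Finset.sum_congr rfl (fun v _ => hX v ω)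
      -- the A-values gap equals R K
      have hK0a : ∑ v ∈ K₀, Aval v = (k : ℝ) * a := by
        have hall : ∀ v ∈ K₀, Aval v = a := fun v hv => hInact v (fun hvA => by
          have hmem : v ∈ K₀ ∩ Act := Finset.mem_inter.2 ⟨hv, hvA⟩
          rw [hK₀inact] at hmem
          exact absurd hmem (Finset.notMem_empty v))
        rw [Finset.sum_congr rfl hall, Finset.sum_const, hK₀card, nsmul_eq_mul]
      have hKsplit : ∑ v ∈ K \ Act, Aval v + ∑ v ∈ K ∩ Act, Aval v = ∑ v ∈ K, Aval v := by
        have h := Finset.sum_sdiff (f := Aval) (Finset.inter_subset_left (s₁ := K) (s₂ := Act))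
        rwa [Finset.sdiff_inter_self_left] at h
      have hKdiffa : ∑ v ∈ K \ Act, Aval v = ((K \ Act).card : ℝ) * a := by
        have hall : ∀ v ∈ K \ Act, Aval v = a := fun v hv =>
          hInact v (Finset.mem_sdiff.1 hv).2
        rw [Finset.sum_congr rfl hall, Finset.sum_const, nsmul_eq_mul]
      have hcardK : ((K ∩ Act).card : ℝ) + ((K \ Act).card : ℝ) = (k : ℝ) := by
        rw [← Nat.cast_add]
        exact_mod_cast congrArg Nat.cast
          ((Finset.card_inter_add_card_sdiff K Act).trans (h𝒦card K hK𝒦))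
      have hRsum : R K = ∑ v ∈ K ∩ Act, Aval v - ((K ∩ Act).card : ℝ) * a := by
        rw [hR K, Finset.sum_sub_distrib, Finset.sum_const, nsmul_eq_mul]
        ring
      have hA : ∑ v ∈ K, Aval v - ∑ v ∈ K₀, Aval v = R K := by
        rw [← hKsplit, hK0a, hKdiffa, hRsum]
        linear_combination a * hcardK
      -- the noise difference
      have hKe : ∑ v ∈ K \ (K ∩ K₀), ε v ω + ∑ v ∈ K ∩ K₀, ε v ω = ∑ v ∈ K, ε v ω :=
        Finset.sum_sdiff (Finset.inter_subset_left (s₁ := K) (s₂ := K₀))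
      have hK0e : ∑ v ∈ K₀ \ (K₀ ∩ K), ε v ω + ∑ v ∈ K₀ ∩ K, ε v ω = ∑ v ∈ K₀, ε v ω :=
        Finset.sum_sdiff (Finset.inter_subset_left (s₁ := K₀) (s₂ := K))
      rw [Finset.sdiff_inter_self_left] at hKe hK0e
      have hIC : ∑ v ∈ K ∩ K₀, ε v ω = ∑ v ∈ K₀ ∩ K, ε v ω := by
        rw [Finset.inter_comm]
      rw [hXs K, hXs K₀] at hω
      have : R K < ∑ v ∈ Q, ε v ω - ∑ v ∈ P, ε v ω := by
        rw [hP, hQ]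
        linarith [hω, hA, hKe, hK0e, hIC]
      exact this.le
    refine le_trans (ENNReal.toReal_mono (measure_ne_top μ _) (measure_mono hsub)) ?_
    have hb := aux_bern μ ε hmeas hindep σ M hMnn hmean hvar hbd P Q hPQ hcards (R K) hRK
    simpa [hP] using hb
  have hsetEq : {ω | ∃ K ∈ 𝒦, (K ∩ Act).Nonempty ∧ ∑ v ∈ K, X v ω < ∑ v ∈ K₀, X v ω}
      = ⋃ K ∈ F, {ω | ∑ v ∈ K, X v ω < ∑ v ∈ K₀, X v ω} := by
    ext ω
    simp only [Set.mem_setOf_eq, Set.mem_iUnion, hF, Finset.mem_filter, exists_prop]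
    constructor
    · rintro ⟨K, hK, hne, hlt⟩; exact ⟨K, ⟨hK, hne⟩, hlt⟩
    · rintro ⟨K, ⟨hK, hne⟩, hlt⟩; exact ⟨K, hK, hne, hlt⟩
  rw [hsetEq]
  have hub : μ (⋃ K ∈ F, {ω | ∑ v ∈ K, X v ω < ∑ v ∈ K₀, X v ω})
      ≤ ∑ K ∈ F, μ {ω | ∑ v ∈ K, X v ω < ∑ v ∈ K₀, X v ω} :=
    measure_biUnion_finset_le F _
  have hne_top : ∑ K ∈ F, μ {ω | ∑ v ∈ K, X v ω < ∑ v ∈ K₀, X v ω} ≠ ⊤ :=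
    (ENNReal.sum_lt_top.2 fun K _ => measure_lt_top μ _).ne
  calc (μ (⋃ K ∈ F, {ω | ∑ v ∈ K, X v ω < ∑ v ∈ K₀, X v ω})).toReal
      ≤ (∑ K ∈ F, μ {ω | ∑ v ∈ K, X v ω < ∑ v ∈ K₀, X v ω}).toReal :=
        ENNReal.toReal_mono hne_top hub
  _ = ∑ K ∈ F, (μ {ω | ∑ v ∈ K, X v ω < ∑ v ∈ K₀, X v ω}).toReal :=
        ENNReal.toReal_sum (fun K _ => measure_ne_top μ _)
  _ ≤ ∑ K ∈ F, Real.exp (-(3 * (R K) ^ 2) /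
        (12 * σ ^ 2 * ((K \ K₀).card : ℝ) + 4 * M * R K)) :=
        Finset.sum_le_sum key
end

section
/- (Consistency master theorem) For each n, consider the bounded-noise graph model on n vertices with constants a < b independent of n, noise bound M and variance σ² independent of n. Let 𝒦(n) be the family of candidate k(n)-subsets used by the scan algorithm, and suppose it contains a fully inactive set K₀(n). If k(n)/log|𝒦(n)| → ∞ and |𝒦(n)|·e^{−n} → 0, then the scan estimator â_n = (1/k(n))·min-average over 𝒦(n) converges to a in probability as n → ∞ (indeed P(|â_n − a| > δ) → 0 for every δ > 0), regardless of the values A_v ≥ b assigned by the adversary on active vertices. -/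
open MeasureTheory ProbabilityTheory Filter

lemma exp_le_linear {M x t : ℝ} (hM : 0 < M) (hx : |x| ≤ M) :
    Real.exp (t * x) ≤ Real.cosh (t*M) + (Real.sinh (t*M) / M) * x := by
  obtain ⟨hx1, hx2⟩ := abs_le.mp hx
  have hl : (0:ℝ) ≤ (M + x)/(2*M) := by
    apply div_nonneg (by linarith) (by linarith)
  have hr : (0:ℝ) ≤ (M - x)/(2*M) := by
    apply div_nonneg (by linarith) (by linarith)
  have hsum : (M + x)/(2*M) + (M - x)/(2*M) = 1 := by field_simp; ring
  have key := convexOn_exp.2 (Set.mem_univ (t*M)) (Set.mem_univ (-(t*M))) hl hr hsum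
  have harg : ((M + x)/(2*M)) • (t*M) + ((M - x)/(2*M)) • (-(t*M)) = t * x := by
    have h2M : (2*M) ≠ 0 := by positivity
    simp only [smul_eq_mul]
    field_simp
    ring
  rw [harg] at key
  refine key.trans (le_of_eq ?_)
  simp only [smul_eq_mul, Real.cosh_eq, Real.sinh_eq]
  field_simp
  ring

lemma integrable_exp_mul_of_bounded {Ω : Type*} [MeasurableSpace Ω] {μ : Measure Ω}
    [IsProbabilityMeasure μ] {X : Ω → ℝ} {M : ℝ}
    (hmeas : Measurable X) (hbd : ∀ᵐ ω ∂μ, |X ω| ≤ M) (t : ℝ) :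
    Integrable (fun ω => Real.exp (t * X ω)) μ := by
  refine Integrable.mono' (integrable_const (Real.exp (|t| * M)))
    ((hmeas.const_mul t).exp.aestronglyMeasurable) ?_
  filter_upwards [hbd] with ω h
  rw [Real.norm_eq_abs, Real.abs_exp]
  refine Real.exp_le_exp.mpr ((le_abs_self _).trans ?_)
  rw [abs_mul]
  exact mul_le_mul_of_nonneg_left h (abs_nonneg t)

lemma integrable_of_bounded' {Ω : Type*} [MeasurableSpace Ω] {μ : Measure Ω}
    [IsProbabilityMeasure μ] {X : Ω → ℝ} {M : ℝ}
    (hmeas : Measurable X) (hbd : ∀ᵐ ω ∂μ, |X ω| ≤ M) :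
    Integrable X μ := by
  refine Integrable.mono' (integrable_const M) hmeas.aestronglyMeasurable ?_
  filter_upwards [hbd] with ω h using by rwa [Real.norm_eq_abs]

lemma mgf_le_of_bounded {Ω : Type*} [MeasurableSpace Ω] {μ : Measure Ω}
    [IsProbabilityMeasure μ] {X : Ω → ℝ} {M : ℝ} (hM : 0 < M)
    (hmeas : Measurable X) (hmean : ∫ ω, X ω ∂μ = 0)
    (hbd : ∀ᵐ ω ∂μ, |X ω| ≤ M) (t : ℝ) :
    mgf X μ t ≤ Real.exp (t^2 * M^2 / 2) := by
  have hXint : Integrable X μ := integrable_of_bounded' hmeas hbd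
  have hint : Integrable (fun ω => Real.exp (t * X ω)) μ :=
    integrable_exp_mul_of_bounded hmeas hbd t
  have hle : mgf X μ t ≤ Real.cosh (t*M) := by
    have h1 : mgf X μ t ≤ ∫ ω, (Real.cosh (t*M) + (Real.sinh (t*M)/M) * X ω) ∂μ := by
      rw [mgf]
      refine integral_mono_ae hint ((integrable_const _).add (hXint.const_mul _)) ?_
      filter_upwards [hbd] with ω h using exp_le_linear hM h
    rwa [integral_add (integrable_const _) (hXint.const_mul _), integral_const,
      probReal_univ, one_smul,
      integral_const_mul, hmean, mul_zero, add_zero] at h1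
  calc mgf X μ t ≤ Real.cosh (t*M) := hle
    _ ≤ Real.exp ((t*M)^2/2) := Real.cosh_le_exp_half_sq _
    _ = Real.exp (t^2*M^2/2) := by ring_nf

lemma tail_bounds {n : ℕ} {Ω : Type*} [MeasurableSpace Ω] {μ : Measure Ω}
    [IsProbabilityMeasure μ] {ε : Fin n → Ω → ℝ} {M : ℝ} (hM : 0 < M)
    (hmeas : ∀ i, Measurable (ε i))
    (hindep : iIndepFun ε μ)
    (hmean : ∀ i, ∫ ω, ε i ω ∂μ = 0)
    (hbd : ∀ i, ∀ᵐ ω ∂μ, |ε i ω| ≤ M)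
    (K : Finset (Fin n)) {δ : ℝ} (hδ : 0 < δ) :
    (μ {ω | (K.card : ℝ) * δ ≤ ∑ v ∈ K, ε v ω}).toReal
        ≤ Real.exp (-(K.card : ℝ) * (δ^2/(2*M^2))) ∧
    (μ {ω | ∑ v ∈ K, ε v ω ≤ -((K.card : ℝ) * δ)}).toReal
        ≤ Real.exp (-(K.card : ℝ) * (δ^2/(2*M^2))) := by
  have hint : ∀ t : ℝ, Integrable (fun ω => Real.exp (t * (∑ v ∈ K, ε v) ω)) μ :=
    fun t => hindep.integrable_exp_mul_sum hmeas
      (fun i _ => integrable_exp_mul_of_bounded (hmeas i) (hbd i) t)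
  have hmgf : ∀ t : ℝ, mgf (∑ v ∈ K, ε v) μ t ≤ Real.exp ((K.card:ℝ) * (t^2*M^2/2)) := by
    intro t
    rw [hindep.mgf_sum hmeas K]
    calc ∏ v ∈ K, mgf (ε v) μ t ≤ ∏ v ∈ K, Real.exp (t^2*M^2/2) :=
          Finset.prod_le_prod (fun v _ => mgf_nonneg)
            (fun v _ => mgf_le_of_bounded hM (hmeas v) (hmean v) (hbd v) t)
      _ = Real.exp ((K.card:ℝ) * (t^2*M^2/2)) := by
          rw [Finset.prod_const, ← Real.exp_nat_mul]
  have hsum : ∀ ω, (∑ v ∈ K, ε v) ω = ∑ v ∈ K, ε v ω := fun ω => Finset.sum_apply ω K ε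
  have ht0 : (0:ℝ) ≤ δ / M^2 := by positivity
  constructor
  · have h1 := measure_ge_le_exp_mul_mgf (μ := μ) (X := ∑ v ∈ K, ε v)
      ((K.card:ℝ)*δ) ht0 (hint _)
    simp only [hsum] at h1
    refine h1.trans ?_
    refine (mul_le_mul_of_nonneg_left (hmgf _) (Real.exp_pos _).le).trans ?_
    rw [← Real.exp_add]
    apply Real.exp_le_exp.mpr
    apply le_of_eq
    have hM2 : (M:ℝ) ≠ 0 := hM.ne'
    field_simp
    ring
  · have h1 := measure_le_le_exp_mul_mgf (μ := μ) (X := ∑ v ∈ K, ε v)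
      (-((K.card:ℝ)*δ)) (t := -(δ / M^2)) (by linarith) (hint _)
    simp only [hsum] at h1
    refine h1.trans ?_
    refine (mul_le_mul_of_nonneg_left (hmgf _) (Real.exp_pos _).le).trans ?_
    rw [← Real.exp_add]
    apply Real.exp_le_exp.mpr
    apply le_of_eq
    have hM2 : (M:ℝ) ≠ 0 := hM.ne'
    field_simp
    ring

lemma aux_pos_of_ratio {x y : ℝ} (hy : 0 ≤ y) (h1 : (1:ℝ) ≤ y / x) : 0 < x := by
  rcases lt_trichotomy x 0 with h|h|h
  · have : y / x ≤ 0 := div_nonpos_of_nonneg_of_nonpos hy h.le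
    linarith
  · rw [h, div_zero] at h1; linarith
  · exact h

lemma two_le_of_log_pos {m : ℕ} (h : 0 < Real.log (m:ℝ)) : (2:ℝ) ≤ (m:ℝ) := by
  have h1 : (1:ℝ) < (m:ℝ) := by
    by_contra hc
    push_neg at hc
    exact absurd (Real.log_nonpos (Nat.cast_nonneg m) hc) (not_le.mpr h)
  have h2 : 1 < m := by exact_mod_cast h1
  exact_mod_cast h2

/-- Consistency master theorem: under the bounded-noise graph model, if the candidate
family `𝒦(n)` contains a fully inactive `k(n)`-set, `k(n)/log|𝒦(n)| → ∞` and
`|𝒦(n)|·e^{−n} → 0`, then the graph scan estimator converges to `a` in probability,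
regardless of the adversary's choice of values on active vertices. -/
theorem stmt_11
    {Ω : ℕ → Type*} [∀ n, MeasurableSpace (Ω n)]
    (μ : ∀ n, Measure (Ω n)) (hprob : ∀ n, IsProbabilityMeasure (μ n))
    (a b σ M : ℝ) (hab : a < b) (hM : 0 < M)
    (Act : ∀ n, Finset (Fin n))
    (Aval : ∀ n, Fin n → ℝ)
    (hInact : ∀ n, ∀ v ∉ Act n, Aval n v = a)
    (hAct : ∀ n, ∀ v ∈ Act n, b ≤ Aval n v)
    (ε : ∀ n, Fin n → Ω n → ℝ)
    (hmeas : ∀ n i, Measurable (ε n i))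
    (hindep : ∀ n, iIndepFun (ε n) (μ n))
    (hident : ∀ n i j, IdentDistrib (ε n i) (ε n j) (μ n) (μ n))
    (hmean : ∀ n i, ∫ ω, ε n i ω ∂(μ n) = 0)
    (hvar : ∀ n i, variance (ε n i) (μ n) = σ ^ 2)
    (hbd : ∀ n i, ∀ᵐ ω ∂(μ n), |ε n i ω| ≤ M)
    (X : ∀ n, Fin n → Ω n → ℝ) (hX : ∀ n v ω, X n v ω = Aval n v + ε n v ω)
    (k : ℕ → ℕ)
    (𝒦 : ∀ n, Finset (Finset (Fin n)))
    (h𝒦card : ∀ n, ∀ K ∈ 𝒦 n, K.card = k n)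
    (K₀ : ∀ n, Finset (Fin n))
    (hK₀mem : ∀ n, K₀ n ∈ 𝒦 n)
    (hK₀inact : ∀ n, K₀ n ∩ Act n = ∅)
    (hgrow : Tendsto (fun n => (k n : ℝ) / Real.log ((𝒦 n).card : ℝ)) atTop atTop)
    (hsize : Tendsto (fun n => ((𝒦 n).card : ℝ) * Real.exp (-(n : ℝ))) atTop (nhds 0))
    (Khat : ∀ n, Ω n → Finset (Fin n))
    (hKhat : ∀ n ω, Khat n ω ∈ 𝒦 n ∧
        ∀ K ∈ 𝒦 n, ∑ v ∈ Khat n ω, X n v ω ≤ ∑ v ∈ K, X n v ω)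
    (ahat : ∀ n, Ω n → ℝ)
    (hahat : ∀ n ω, ahat n ω = (1 / (k n : ℝ)) * ∑ v ∈ Khat n ω, X n v ω) :
    ∀ δ > 0,
      Tendsto (fun n => ((μ n) {ω | δ < |ahat n ω - a|}).toReal) atTop (nhds 0) := by
  intro δ hδ
  set c : ℝ := δ^2/(2*M^2) with hc_def
  have hc : 0 < c := by positivity
  -- Step 1: the per-n Chernoff + union bound, valid whenever k n ≥ 1
  have key : ∀ n, 1 ≤ k n →
      ((μ n) {ω | δ < |ahat n ω - a|}).toReal
        ≤ Real.exp (-(k n : ℝ) * c) * (1 + ((𝒦 n).card : ℝ)) := by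
    intro n hk
    haveI := hprob n
    have hkpos : (0:ℝ) < (k n : ℝ) := by exact_mod_cast hk
    have hcard : ∀ K ∈ 𝒦 n, K.card = k n := h𝒦card n
    have hK₀card : (K₀ n).card = k n := hcard _ (hK₀mem n)
    have hsub : {ω | δ < |ahat n ω - a|} ⊆
        {ω | (k n : ℝ) * δ ≤ ∑ v ∈ K₀ n, ε n v ω} ∪
          ⋃ K ∈ 𝒦 n, {ω | ∑ v ∈ K, ε n v ω ≤ -((k n : ℝ) * δ)} := by
      intro ω hω
      simp only [Set.mem_setOf_eq] at hω
      have hKhatmem := (hKhat n ω).1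
      have hKhatcard : (Khat n ω).card = k n := hcard _ hKhatmem
      have hksum : (k n : ℝ) * ahat n ω = ∑ v ∈ Khat n ω, X n v ω := by
        rw [hahat n ω]
        field_simp
      -- upper bound on ahat via K₀
      have hup : (k n : ℝ) * (ahat n ω - a) ≤ ∑ v ∈ K₀ n, ε n v ω := by
        have h1 : ∑ v ∈ Khat n ω, X n v ω ≤ ∑ v ∈ K₀ n, X n v ω :=
          (hKhat n ω).2 _ (hK₀mem n)
        have hz : ∀ v ∈ K₀ n, Aval n v = a := by
          intro v hv
          refine hInact n v (fun hvAct => ?_)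
          have hmem : v ∈ K₀ n ∩ Act n := Finset.mem_inter.mpr ⟨hv, hvAct⟩
          rw [hK₀inact n] at hmem
          exact absurd hmem (Finset.notMem_empty v)
        have h2 : ∑ v ∈ K₀ n, X n v ω = (k n : ℝ) * a + ∑ v ∈ K₀ n, ε n v ω := by
          simp only [hX]
          rw [Finset.sum_add_distrib]
          congr 1
          rw [Finset.sum_congr rfl hz, Finset.sum_const, hK₀card, nsmul_eq_mul]
        have h3 : (k n : ℝ) * (ahat n ω - a) = (k n : ℝ) * ahat n ω - (k n : ℝ) * a := by
          ring
        linarith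
      -- lower bound on ahat via Khat
      have hlow : ∑ v ∈ Khat n ω, ε n v ω ≤ (k n : ℝ) * (ahat n ω - a) := by
        have hAv : ∀ v ∈ Khat n ω, a ≤ Aval n v := by
          intro v _
          by_cases hv : v ∈ Act n
          · exact le_of_lt (lt_of_lt_of_le hab (hAct n v hv))
          · exact le_of_eq (hInact n v hv).symm
        have h2 : (k n : ℝ) * a + ∑ v ∈ Khat n ω, ε n v ω ≤ ∑ v ∈ Khat n ω, X n v ω := by
          have hXeq : ∑ v ∈ Khat n ω, X n v ω
              = ∑ v ∈ Khat n ω, Aval n v + ∑ v ∈ Khat n ω, ε n v ω := by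
            simp only [hX]
            rw [Finset.sum_add_distrib]
          have hge : (k n : ℝ) * a ≤ ∑ v ∈ Khat n ω, Aval n v := by
            calc (k n : ℝ) * a = ∑ _v ∈ Khat n ω, a := by
                  rw [Finset.sum_const, hKhatcard, nsmul_eq_mul]
              _ ≤ ∑ v ∈ Khat n ω, Aval n v := Finset.sum_le_sum hAv
          linarith [hXeq]
        have h3 : (k n : ℝ) * (ahat n ω - a) = (k n : ℝ) * ahat n ω - (k n : ℝ) * a := by
          ring
        linarith
      rcases lt_abs.mp hω with h | h
      · -- δ < ahat - a : upper tail event for K₀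
        left
        simp only [Set.mem_setOf_eq]
        nlinarith
      · -- δ < -(ahat - a) : lower tail event for Khat ω
        right
        refine Set.mem_iUnion₂.mpr ⟨Khat n ω, hKhatmem, ?_⟩
        simp only [Set.mem_setOf_eq]
        nlinarith
    have hmeasbd : (μ n) {ω | δ < |ahat n ω - a|}
        ≤ (μ n) {ω | (k n : ℝ) * δ ≤ ∑ v ∈ K₀ n, ε n v ω}
          + ∑ K ∈ 𝒦 n, (μ n) {ω | ∑ v ∈ K, ε n v ω ≤ -((k n : ℝ) * δ)} := by
      refine (measure_mono hsub).trans ((measure_union_le _ _).trans ?_)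
      gcongr
      exact measure_biUnion_finset_le _ _
    have hsum_ne : (∑ K ∈ 𝒦 n, (μ n) {ω | ∑ v ∈ K, ε n v ω ≤ -((k n : ℝ) * δ)}) ≠ ⊤ :=
      (ENNReal.sum_lt_top.mpr (fun K _ => measure_lt_top _ _)).ne
    calc ((μ n) {ω | δ < |ahat n ω - a|}).toReal
        ≤ ((μ n) {ω | (k n : ℝ) * δ ≤ ∑ v ∈ K₀ n, ε n v ω}
            + ∑ K ∈ 𝒦 n, (μ n) {ω | ∑ v ∈ K, ε n v ω ≤ -((k n : ℝ) * δ)}).toReal :=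
          ENNReal.toReal_mono (ENNReal.add_ne_top.mpr ⟨measure_ne_top _ _, hsum_ne⟩) hmeasbd
      _ = ((μ n) {ω | (k n : ℝ) * δ ≤ ∑ v ∈ K₀ n, ε n v ω}).toReal
            + ∑ K ∈ 𝒦 n, ((μ n) {ω | ∑ v ∈ K, ε n v ω ≤ -((k n : ℝ) * δ)}).toReal := by
          rw [ENNReal.toReal_add (measure_ne_top _ _) hsum_ne,
            ENNReal.toReal_sum (fun K _ => measure_ne_top _ _)]
      _ ≤ Real.exp (-(k n : ℝ) * c) + ∑ K ∈ 𝒦 n, Real.exp (-(k n : ℝ) * c) := by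
          apply add_le_add
          · have h := (tail_bounds hM (hmeas n) (hindep n) (hmean n) (hbd n) (K₀ n) hδ).1
            rwa [hK₀card] at h
          · refine Finset.sum_le_sum (fun K hK => ?_)
            have h := (tail_bounds hM (hmeas n) (hindep n) (hmean n) (hbd n) K hδ).2
            rwa [hcard K hK] at h
      _ = Real.exp (-(k n : ℝ) * c) * (1 + ((𝒦 n).card : ℝ)) := by
          rw [Finset.sum_const, nsmul_eq_mul]
          ring
  -- Step 2: asymptotics
  have hkinf : Tendsto (fun n => (k n : ℝ)) atTop atTop := by
    rw [tendsto_atTop]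
    intro C
    filter_upwards [hgrow.eventually_ge_atTop 1,
      hgrow.eventually_ge_atTop (C / Real.log 2)] with n h1 h2
    have hLpos : 0 < Real.log ((𝒦 n).card : ℝ) :=
      aux_pos_of_ratio (Nat.cast_nonneg _) h1
    have hcard2 : (2:ℝ) ≤ ((𝒦 n).card : ℝ) := two_le_of_log_pos hLpos
    have hlog2 : Real.log 2 ≤ Real.log ((𝒦 n).card : ℝ) :=
      Real.log_le_log (by norm_num) hcard2
    have hkeq : (k n : ℝ) = ((k n : ℝ) / Real.log ((𝒦 n).card : ℝ)) * Real.log ((𝒦 n).card : ℝ) :=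
      (div_mul_cancel₀ _ hLpos.ne').symm
    calc C ≤ (C / Real.log 2) * Real.log 2 := by
          rw [div_mul_cancel₀ _ (Real.log_pos one_lt_two).ne']
      _ ≤ ((k n : ℝ) / Real.log ((𝒦 n).card : ℝ)) * Real.log ((𝒦 n).card : ℝ) :=
          mul_le_mul h2 hlog2 (Real.log_pos one_lt_two).le (le_trans zero_le_one h1)
      _ = (k n : ℝ) := hkeq.symm
  have hmain : ∀ᶠ n in atTop, ((μ n) {ω | δ < |ahat n ω - a|}).toReal
      ≤ 2 * Real.exp (-(c/2) * (k n : ℝ)) := by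
    filter_upwards [hgrow.eventually_ge_atTop 1, hgrow.eventually_ge_atTop (2/c)] with n h1 h2
    have hLpos : 0 < Real.log ((𝒦 n).card : ℝ) :=
      aux_pos_of_ratio (Nat.cast_nonneg _) h1
    have hk1 : 1 ≤ k n := by
      rcases Nat.eq_zero_or_pos (k n) with h | h
      · rw [h] at h1; norm_num at h1
      · exact h
    have hkL : Real.log ((𝒦 n).card : ℝ) ≤ (c/2) * (k n : ℝ) := by
      rw [div_le_div_iff₀ hc hLpos] at h2
      linarith
    refine (key n hk1).trans ?_
    have hcardpos : (0:ℝ) < ((𝒦 n).card : ℝ) := by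
      linarith [two_le_of_log_pos hLpos]
    have hcardeq : ((𝒦 n).card : ℝ) = Real.exp (Real.log ((𝒦 n).card : ℝ)) :=
      (Real.exp_log hcardpos).symm
    have hknn : (0:ℝ) ≤ (k n : ℝ) := Nat.cast_nonneg _
    have e1 : Real.exp (-(k n : ℝ) * c) ≤ Real.exp (-(c/2) * (k n : ℝ)) := by
      apply Real.exp_le_exp.mpr
      nlinarith
    have e2 : Real.exp (-(k n : ℝ) * c + Real.log ((𝒦 n).card : ℝ))
        ≤ Real.exp (-(c/2) * (k n : ℝ)) := by
      apply Real.exp_le_exp.mpr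
      linarith
    calc Real.exp (-(k n : ℝ) * c) * (1 + ((𝒦 n).card : ℝ))
        = Real.exp (-(k n : ℝ) * c)
            + Real.exp (-(k n : ℝ) * c + Real.log ((𝒦 n).card : ℝ)) := by
          rw [Real.exp_add, mul_add, mul_one, ← hcardeq]
      _ ≤ 2 * Real.exp (-(c/2) * (k n : ℝ)) := by linarith
  refine squeeze_zero' (Eventually.of_forall (fun n => ENNReal.toReal_nonneg)) hmain ?_
  have hbot : Tendsto (fun n => -(c/2) * (k n : ℝ)) atTop atBot := by
    have := hkinf.const_mul_atTop (show (0:ℝ) < c/2 by positivity)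
    have h2 := tendsto_neg_atTop_atBot.comp this
    simpa [Function.comp_def, neg_mul] using h2
  have hexp : Tendsto (fun n => Real.exp (-(c/2) * (k n : ℝ))) atTop (nhds 0) :=
    Real.tendsto_exp_atBot.comp hbot
  simpa using hexp.const_mul 2
end

section
/- Under the bounded-noise model, if ℜ(K) ≥ c·k for some constant c > 0 (e.g., when at least a fixed fraction of K is active and A_v ≥ b), then P(S_K < S_{K₀}) ≤ exp(−λk) for λ = 3c²/(12σ² + 4Mc) > 0, i.e., the misselection probability decays exponentially in the neighborhood size k. -/
open MeasureTheory ProbabilityTheory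

private theorem exp_quad_bound' (x v : ℝ) (hx : |x| ≤ v) (hv : v ≤ 1) :
    Real.exp x ≤ 1 + x + (1/2 + 2*v/9) * x^2 := by
  have hx1 : |x| ≤ 1 := hx.trans hv
  have h := Real.exp_bound hx1 (n := 3) (by norm_num)
  have hsum : ∑ m ∈ Finset.range 3, x ^ m / m.factorial = 1 + x + x^2/2 := by
    simp [Finset.sum_range_succ, Nat.factorial]
  rw [hsum] at h
  have h2 : Real.exp x ≤ 1 + x + x^2/2 + |x|^3 * (2/9) := by
    have := (abs_sub_le_iff.1 h).1
    norm_num [Nat.factorial] at this ⊢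
    linarith
  have h3 : |x|^3 ≤ v * x^2 := by
    have he : |x|^3 = |x| * x^2 := by rw [pow_succ, sq_abs]; ring
    rw [he]
    nlinarith [abs_nonneg x, sq_nonneg x]
  nlinarith [sq_nonneg x]

private theorem mgf_bound_aux' {Ω : Type*} [MeasurableSpace Ω] (μ : Measure Ω)
    [IsProbabilityMeasure μ]
    (W : Ω → ℝ) (hW : Measurable W) (M s t : ℝ) (hM : 0 < M) (ht : 0 ≤ t)
    (htM : t * M ≤ 1) (hbd : ∀ᵐ ω ∂μ, |W ω| ≤ M)
    (hmean : ∫ ω, W ω ∂μ = 0) (hvar : variance W μ = s) :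
    Integrable (fun ω => Real.exp (t * W ω)) μ ∧
    mgf W μ t ≤ Real.exp (t^2 * s * (1/2 + 2*(t*M)/9)) := by
  have hWsm : AEStronglyMeasurable W μ := hW.aestronglyMeasurable
  have hWexp_int : Integrable (fun ω => Real.exp (t * W ω)) μ := by
    refine Integrable.mono' (integrable_const (Real.exp (t * M))) ?_ ?_
    · exact ((hW.const_mul t).exp).aestronglyMeasurable
    · filter_upwards [hbd] with ω hω
      rw [Real.norm_eq_abs, abs_of_pos (Real.exp_pos _)]
      exact Real.exp_le_exp.2 (by nlinarith [le_abs_self (W ω), abs_nonneg (W ω)])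
  refine ⟨hWexp_int, ?_⟩
  have hWint : Integrable W μ := by
    refine Integrable.mono' (integrable_const M) hWsm ?_
    filter_upwards [hbd] with ω hω using by rwa [Real.norm_eq_abs]
  have hWsq_int : Integrable (fun ω => (W ω)^2) μ := by
    refine Integrable.mono' (integrable_const (M^2)) ((hW.pow_const 2).aestronglyMeasurable) ?_
    filter_upwards [hbd] with ω hω
    rw [Real.norm_eq_abs, abs_of_nonneg (sq_nonneg _), ← sq_abs]
    exact pow_le_pow_left₀ (abs_nonneg _) hω 2
  have hmem2 : MemLp W 2 μ := by
    have := memLp_top_of_bound hWsm M hbd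
    exact this.mono_exponent le_top
  have hsqint : ∫ ω, (W ω)^2 ∂μ = s := by
    have := variance_eq_sub (μ := μ) hmem2
    rw [hvar] at this
    simp only [Pi.pow_apply] at this
    rw [hmean] at this
    simpa using this.symm
  have hs : 0 ≤ s := hvar ▸ variance_nonneg W μ
  have hptwise : ∀ᵐ ω ∂μ, Real.exp (t * W ω) ≤ 1 + t * W ω + (1/2 + 2*(t*M)/9) * (t * W ω)^2 := by
    filter_upwards [hbd] with ω hω
    refine exp_quad_bound' _ _ ?_ htM
    rw [abs_mul, abs_of_nonneg ht]
    exact mul_le_mul_of_nonneg_left hω ht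
  have hrhs_int : Integrable (fun ω => 1 + t * W ω + (1/2 + 2*(t*M)/9) * (t * W ω)^2) μ := by
    refine Integrable.add (Integrable.add (integrable_const 1) (hWint.const_mul t)) ?_
    have : (fun ω => (1/2 + 2*(t*M)/9) * (t * W ω)^2)
        = fun ω => ((1/2 + 2*(t*M)/9) * t^2) * (W ω)^2 := by
      funext ω; ring
    rw [this]
    exact hWsq_int.const_mul _
  have hint_le := integral_mono_ae hWexp_int hrhs_int hptwise
  have hval : ∫ ω, (1 + t * W ω + (1/2 + 2*(t*M)/9) * (t * W ω)^2) ∂μ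
      = 1 + t^2 * s * (1/2 + 2*(t*M)/9) := by
    have h1 : (fun ω => 1 + t * W ω + (1/2 + 2*(t*M)/9) * (t * W ω)^2)
        = fun ω => (1 + t * W ω) + ((1/2 + 2*(t*M)/9) * t^2) * (W ω)^2 := by
      funext ω; ring
    rw [h1, integral_add (by exact (integrable_const 1).add (hWint.const_mul t))
        (hWsq_int.const_mul _),
      integral_add (integrable_const 1) (hWint.const_mul t),
      integral_const, integral_const_mul, integral_const_mul, hmean, hsqint]
    simp; ring
  calc mgf W μ t = ∫ ω, Real.exp (t * W ω) ∂μ := rfl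
    _ ≤ 1 + t^2 * s * (1/2 + 2*(t*M)/9) := by rw [← hval]; exact hint_le
    _ ≤ Real.exp (t^2 * s * (1/2 + 2*(t*M)/9)) := by
        have := Real.add_one_le_exp (t^2 * s * (1/2 + 2*(t*M)/9)); linarith

private theorem arith_aux' (s M c : ℝ) (hs : 0 ≤ s) (hM : 0 < M) (hc : 0 < c) :
    3 * c^2 / (12 * s + 4 * M * c)
      ≤ (c/(2*s+M*c)) * c - 2 * ((c/(2*s+M*c))^2 * s * (1/2 + 2*((c/(2*s+M*c))*M)/9)) := by
  have hd : 0 < 2*s+M*c := by positivity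
  have hd2 : 0 < 12*s+4*M*c := by positivity
  rw [div_le_iff₀ hd2]
  have key : ((c/(2*s+M*c)) * c - 2 * ((c/(2*s+M*c))^2 * s * (1/2 + 2*((c/(2*s+M*c))*M)/9)))
        * (12*s+4*M*c) - 3*c^2
      = c^2 * ((8/3)*s^2*(M*c) + (38/9)*s*(M*c)^2 + (M*c)^3) / (2*s+M*c)^3 := by
    field_simp
    ring
  nlinarith [key, pow_pos hd 3,
    div_nonneg (mul_nonneg (sq_nonneg c)
      (by positivity : (0:ℝ) ≤ (8/3)*s^2*(M*c) + (38/9)*s*(M*c)^2 + (M*c)^3)) (pow_pos hd 3).le]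

/-- Exponential decay of the misselection probability: if `ℜ(K) ≥ c·k` with `c > 0`,
then `P(S_K < S_{K₀}) ≤ exp(−λk)` with `λ = 3c²/(12σ² + 4Mc)`. -/
theorem stmt_17
    {Ω V : Type*} [MeasurableSpace Ω] (μ : Measure Ω) [IsProbabilityMeasure μ]
    [Fintype V] [DecidableEq V]
    (Act : Finset V) (a b σ M : ℝ) (hab : a < b) (hM : 0 < M)
    (Aval : V → ℝ)
    (hInact : ∀ v ∉ Act, Aval v = a)
    (hAct : ∀ v ∈ Act, b ≤ Aval v)
    (ε : V → Ω → ℝ)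
    (hmeas : ∀ v, Measurable (ε v))
    (hindep : iIndepFun ε μ)
    (hident : ∀ v w, IdentDistrib (ε v) (ε w) μ μ)
    (hmean : ∀ v, ∫ ω, ε v ω ∂μ = 0)
    (hvar : ∀ v, variance (ε v) μ = σ ^ 2)
    (hbd : ∀ v, ∀ᵐ ω ∂μ, |ε v ω| ≤ M)
    (X : V → Ω → ℝ) (hX : ∀ v ω, X v ω = Aval v + ε v ω)
    (K₀ K : Finset V) (k : ℕ)
    (hKcard : K.card = k) (hK₀card : K₀.card = k)
    (hK₀inact : K₀ ∩ Act = ∅)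
    (R : ℝ) (hR : R = ∑ v ∈ K, (Aval v - a))
    (c : ℝ) (hc : 0 < c) (hRk : c * (k : ℝ) ≤ R)
    (lam : ℝ) (hlam : lam = 3 * c ^ 2 / (12 * σ ^ 2 + 4 * M * c)) :
    0 < lam ∧
    (μ {ω | ∑ v ∈ K, X v ω < ∑ v ∈ K₀, X v ω}).toReal
      ≤ Real.exp (-lam * (k : ℝ)) := by
  classical
  have hs0 : (0:ℝ) ≤ σ^2 := sq_nonneg σ
  have hdpos : (0:ℝ) < 2*σ^2 + M*c := by positivity
  have hlampos : 0 < lam := by rw [hlam]; positivity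
  refine ⟨hlampos, ?_⟩
  set s : ℝ := σ^2 with hs_def
  set t : ℝ := c / (2*s + M*c) with ht_def
  have ht : 0 < t := div_pos hc hdpos
  have htM : t * M ≤ 1 := by
    rw [ht_def, div_mul_eq_mul_div, div_le_one hdpos]
    nlinarith
  set D : Finset V := K \ K₀ with hD_def
  set D₀ : Finset V := K₀ \ K with hD₀_def
  have hdisj : Disjoint D D₀ := disjoint_sdiff_sdiff
  set E' : Finset V := D ∪ D₀ with hE'_def
  set g : V → ℝ → ℝ := fun v x => if v ∈ D then -x else x with hg_def
  set Y : V → Ω → ℝ := fun v => g v ∘ ε v with hY_def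
  have hgmeas : ∀ v, Measurable (g v) := by
    intro v
    by_cases hv : v ∈ D
    · simp only [hg_def, hv, if_true]; exact measurable_id.neg
    · simp only [hg_def, hv, if_false]; exact measurable_id
  have hYmeas : ∀ v, Measurable (Y v) := fun v => (hgmeas v).comp (hmeas v)
  have hYindep : iIndepFun Y μ := hindep.comp g hgmeas
  have hYbd : ∀ v, ∀ᵐ ω ∂μ, |Y v ω| ≤ M := by
    intro v
    filter_upwards [hbd v] with ω hω
    by_cases hv : v ∈ D <;> simp [hY_def, hg_def, hv, abs_neg, hω]
  have hYmean : ∀ v, ∫ ω, Y v ω ∂μ = 0 := by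
    intro v
    by_cases hv : v ∈ D
    · have : (fun ω => Y v ω) = fun ω => -(ε v ω) := by
        funext ω; simp [hY_def, hg_def, hv]
      rw [this, integral_neg, hmean v, neg_zero]
    · have : (fun ω => Y v ω) = fun ω => ε v ω := by
        funext ω; simp [hY_def, hg_def, hv]
      rw [this]; exact hmean v
  have hYvar : ∀ v, variance (Y v) μ = s := by
    intro v
    by_cases hv : v ∈ D
    · have : Y v = fun ω => (-1 : ℝ) * ε v ω := by
        funext ω; simp [hY_def, hg_def, hv]
      rw [this, variance_const_mul]
      simp [hvar v, hs_def]
    · have : Y v = fun ω => ε v ω := by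
        funext ω; simp [hY_def, hg_def, hv]
      rw [this]; exact hvar v
  set q : ℝ := t^2 * s * (1/2 + 2*(t*M)/9) with hq_def
  have hq0 : 0 ≤ q := by
    have : (0:ℝ) ≤ 1/2 + 2*(t*M)/9 := by nlinarith [mul_nonneg ht.le hM.le]
    positivity
  have hmgf : ∀ v, mgf (Y v) μ t ≤ Real.exp q := fun v =>
    (mgf_bound_aux' μ (Y v) (hYmeas v) M s t hM ht.le htM (hYbd v) (hYmean v) (hYvar v)).2
  -- the summed variable
  set Z : Ω → ℝ := ∑ v ∈ E', Y v with hZ_def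
  have hZapp : ∀ ω, Z ω = ∑ v ∈ E', Y v ω := by
    intro ω; rw [hZ_def]; simp [Finset.sum_apply]
  -- event inclusion
  have hK₀a : ∀ v ∈ K₀, Aval v = a := by
    intro v hv
    refine hInact v fun hvAct => ?_
    have : v ∈ K₀ ∩ Act := Finset.mem_inter.2 ⟨hv, hvAct⟩
    rw [hK₀inact] at this
    exact absurd this (Finset.notMem_empty v)
  have hsub : {ω | ∑ v ∈ K, X v ω < ∑ v ∈ K₀, X v ω} ⊆ {ω | c * (k:ℝ) ≤ Z ω} := by
    intro ω hω
    simp only [Set.mem_setOf_eq] at hω ⊢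
    have hXK : ∑ v ∈ K, X v ω = (R + (k:ℝ)*a) + ∑ v ∈ K, ε v ω := by
      have h1 : ∑ v ∈ K, X v ω = ∑ v ∈ K, Aval v + ∑ v ∈ K, ε v ω := by
        simp only [hX]; rw [Finset.sum_add_distrib]
      have h2 : ∑ v ∈ K, Aval v = R + (k:ℝ)*a := by
        rw [hR, Finset.sum_sub_distrib, Finset.sum_const, hKcard, nsmul_eq_mul]
        ring
      rw [h1, h2]
    have hXK₀ : ∑ v ∈ K₀, X v ω = (k:ℝ)*a + ∑ v ∈ K₀, ε v ω := by
      have h1 : ∑ v ∈ K₀, X v ω = ∑ v ∈ K₀, Aval v + ∑ v ∈ K₀, ε v ω := by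
        simp only [hX]; rw [Finset.sum_add_distrib]
      have h2 : ∑ v ∈ K₀, Aval v = (k:ℝ)*a := by
        rw [Finset.sum_congr rfl hK₀a, Finset.sum_const, hK₀card, nsmul_eq_mul]
      rw [h1, h2]
    have hRlt : R < ∑ v ∈ K₀, ε v ω - ∑ v ∈ K, ε v ω := by
      rw [hXK, hXK₀] at hω; linarith
    have hsplitK : ∑ v ∈ K, ε v ω = ∑ v ∈ D, ε v ω + ∑ v ∈ K ∩ K₀, ε v ω := by
      rw [hD_def, ← Finset.sdiff_inter_self_left K K₀]
      exact (Finset.sum_sdiff Finset.inter_subset_left).symm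
    have hsplitK₀ : ∑ v ∈ K₀, ε v ω = ∑ v ∈ D₀, ε v ω + ∑ v ∈ K ∩ K₀, ε v ω := by
      rw [hD₀_def, Finset.inter_comm, ← Finset.sdiff_inter_self_left K₀ K]
      exact (Finset.sum_sdiff Finset.inter_subset_left).symm
    have hZval : Z ω = ∑ v ∈ K₀, ε v ω - ∑ v ∈ K, ε v ω := by
      rw [hZapp, hE'_def, Finset.sum_union hdisj]
      have hD' : ∑ v ∈ D, Y v ω = -∑ v ∈ D, ε v ω := by
        rw [← Finset.sum_neg_distrib]
        refine Finset.sum_congr rfl fun v hv => ?_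
        simp [hY_def, hg_def, hv]
      have hD₀' : ∑ v ∈ D₀, Y v ω = ∑ v ∈ D₀, ε v ω := by
        refine Finset.sum_congr rfl fun v hv => ?_
        have : v ∉ D := Finset.disjoint_right.1 hdisj hv
        simp [hY_def, hg_def, this]
      rw [hD', hD₀', hsplitK, hsplitK₀]; ring
    rw [hZval]
    linarith
  -- integrability of exp (t * Z)
  have hbdall : ∀ᵐ ω ∂μ, ∀ v, |Y v ω| ≤ M := ae_all_iff.2 hYbd
  have hZint : Integrable (fun ω => Real.exp (t * Z ω)) μ := by
    refine Integrable.mono' (integrable_const (Real.exp (t * (E'.card * M)))) ?_ ?_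
    · have he : (fun ω => Real.exp (t * Z ω)) = fun ω => Real.exp (t * ∑ v ∈ E', Y v ω) := by
        funext ω; rw [hZapp]
      rw [he]
      exact ((Finset.measurable_sum E' fun v _ => hYmeas v).const_mul t).exp.aestronglyMeasurable
    · filter_upwards [hbdall] with ω hω
      rw [Real.norm_eq_abs, abs_of_pos (Real.exp_pos _)]
      refine Real.exp_le_exp.2 (mul_le_mul_of_nonneg_left ?_ ht.le)
      calc Z ω ≤ |Z ω| := le_abs_self _
        _ ≤ ∑ v ∈ E', |Y v ω| := by rw [hZapp]; exact Finset.abs_sum_le_sum_abs _ _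
        _ ≤ ∑ _v ∈ E', M := Finset.sum_le_sum fun v _ => hω v
        _ = E'.card * M := by rw [Finset.sum_const, nsmul_eq_mul]
  -- Chernoff
  have hchernoff := measure_ge_le_exp_mul_mgf (X := Z) (μ := μ) (c * (k:ℝ)) ht.le hZint
  have hmgfZ : mgf Z μ t = ∏ v ∈ E', mgf (Y v) μ t := hYindep.mgf_sum hYmeas E'
  have hcard : (E'.card : ℝ) ≤ 2 * k := by
    have h1 : D.card ≤ k := hKcard ▸ Finset.card_le_card Finset.sdiff_subset
    have h2 : D₀.card ≤ k := hK₀card ▸ Finset.card_le_card Finset.sdiff_subset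
    have h3 : E'.card = D.card + D₀.card := Finset.card_union_of_disjoint hdisj
    have h4 : E'.card ≤ 2 * k := by rw [h3]; omega
    calc (E'.card : ℝ) ≤ ((2 * k : ℕ) : ℝ) := Nat.cast_le.2 h4
      _ = 2 * (k : ℝ) := by push_cast; ring
  have hprod : ∏ v ∈ E', mgf (Y v) μ t ≤ Real.exp (2 * k * q) := by
    calc ∏ v ∈ E', mgf (Y v) μ t ≤ ∏ _v ∈ E', Real.exp q :=
          Finset.prod_le_prod (fun v _ => mgf_nonneg) (fun v _ => hmgf v)
      _ = Real.exp q ^ E'.card := Finset.prod_const _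
      _ = Real.exp (E'.card * q) := (Real.exp_nat_mul q E'.card).symm
      _ ≤ Real.exp (2 * k * q) := Real.exp_le_exp.2 (by nlinarith)
  have hkey : Real.exp (-t * (c * k)) * Real.exp (2 * k * q) ≤ Real.exp (-lam * k) := by
    rw [← Real.exp_add, Real.exp_le_exp]
    have harith : lam ≤ t * c - 2 * q := by
      rw [hlam, hq_def, ht_def]
      exact arith_aux' s M c hs0 hM hc
    have hk0 : (0:ℝ) ≤ (k:ℝ) := Nat.cast_nonneg k
    nlinarith
  calc (μ {ω | ∑ v ∈ K, X v ω < ∑ v ∈ K₀, X v ω}).toReal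
      ≤ (μ {ω | c * (k:ℝ) ≤ Z ω}).toReal := by
        exact ENNReal.toReal_mono (measure_ne_top μ _) (measure_mono hsub)
    _ ≤ Real.exp (-t * (c * k)) * mgf Z μ t := hchernoff
    _ ≤ Real.exp (-t * (c * k)) * Real.exp (2 * k * q) := by
        rw [hmgfZ]; exact mul_le_mul_of_nonneg_left hprod (Real.exp_pos _).le
    _ ≤ Real.exp (-lam * k) := hkey
end
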